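/- arXiv:1705.04507 — 2 statements merged into one kernel-verified Lean document; each statement's English description precedes it below -/
import Mathlib

section
/- Let f be a bent Boolean function on F_2^{2m} with m ≥ 1 and f(0) = 0, with dual f̂ and weight class wc(f). Define the graph R(f) on vertex set F_2^{2m} in which distinct x, z are adjacent iff |{y | f(y) = 1 and ⟨x+z, y⟩ = 1}| = 2^{2m-2} - 2^{m-1} when wc(f) = 0, respectively |{y | f(y) = 1 and ⟨x+z, y⟩ = 1}| = 2^{2m-2} + 2^{m-1} when wc(f) = 1. Then R(f) is isomorphic to the Cayley graph of the Boolean function x ↦ f̂(x) + wc(f). -/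
open Finset

/-- Inner product on `F_2^n`. -/
def dotp {n : ℕ} (x y : Fin n → ZMod 2) : ZMod 2 := ∑ i, x i * y i

/-- Hamming weight of a Boolean function: the cardinality of its support. -/
def wt {n : ℕ} (f : (Fin n → ZMod 2) → ZMod 2) : ℕ :=
  (Finset.univ.filter fun x => f x = 1).card

/-- Walsh–Hadamard transform of a Boolean function. -/
def walsh {n : ℕ} (f : (Fin n → ZMod 2) → ZMod 2) (x : Fin n → ZMod 2) : ℤ :=
  ∑ y : Fin n → ZMod 2, (-1 : ℤ) ^ (f y + dotp x y).val

/-- A Boolean function on `F_2^(2m)` is bent if its Walsh–Hadamard transform has constant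
absolute value `2^m`. -/
def IsBent {m : ℕ} (f : (Fin (2 * m) → ZMod 2) → ZMod 2) : Prop :=
  ∀ x, |walsh f x| = 2 ^ m

/-- The dual of a bent function: `f̂ x = 0` if `W_f x = 2^m`, and `1` otherwise
(for bent `f` the other case is exactly `W_f x = -2^m`). -/
def dual {m : ℕ} (f : (Fin (2 * m) → ZMod 2) → ZMod 2) :
    (Fin (2 * m) → ZMod 2) → ZMod 2 :=
  fun x => if walsh f x = 2 ^ m then 0 else 1

/-- The weight class of a bent function on `F_2^(2m)`:
`0` if its weight is `2^(2m-1) - 2^(m-1)`, and `1` otherwise. -/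
def wc {m : ℕ} (f : (Fin (2 * m) → ZMod 2) → ZMod 2) : ZMod 2 :=
  if wt f = 2 ^ (2 * m - 1) - 2 ^ (m - 1) then 0 else 1

/-- The Cayley graph of a Boolean function: distinct `x`, `y` are adjacent iff `f (x+y) = 1`. -/
def cayley {n : ℕ} (f : (Fin n → ZMod 2) → ZMod 2) : SimpleGraph (Fin n → ZMod 2) where
  Adj x y := x ≠ y ∧ f (x + y) = 1
  symm := ⟨fun x y h => ⟨h.1.symm, by rw [add_comm]; exact h.2⟩⟩
  loopless := ⟨fun x h => h.1 rfl⟩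

instance cayleyAdjDecidable {n : ℕ} (f : (Fin n → ZMod 2) → ZMod 2) :
    DecidableRel (cayley f).Adj :=
  fun x y => inferInstanceAs (Decidable (x ≠ y ∧ f (x + y) = 1))

/-- The weight of the codeword of `C(f)` corresponding to `x`. -/
def codewordWeight {m : ℕ} (f : (Fin (2 * m) → ZMod 2) → ZMod 2)
    (x : Fin (2 * m) → ZMod 2) : ℕ :=
  (Finset.univ.filter fun y => f y = 1 ∧ dotp x y = 1).card

/-- The graph `R(f)`: distinct `x`, `z` are adjacent iff the weight of the codeword
corresponding to `x + z` equals `2^(2m-2) - 2^(m-1)` if `wc f = 0`, and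
`2^(2m-2) + 2^(m-1)` if `wc f = 1`. -/
def Rgraph {m : ℕ} (f : (Fin (2 * m) → ZMod 2) → ZMod 2) :
    SimpleGraph (Fin (2 * m) → ZMod 2) where
  Adj x z := x ≠ z ∧
    codewordWeight f (x + z) =
      (if wc f = 0 then 2 ^ (2 * m - 2) - 2 ^ (m - 1) else 2 ^ (2 * m - 2) + 2 ^ (m - 1))
  symm := ⟨fun x z h => ⟨h.1.symm, by rw [add_comm]; exact h.2⟩⟩
  loopless := ⟨fun x h => h.1 rfl⟩

section Aux
open Finset

lemma aux_walsh_eq_count {n : ℕ} (g : (Fin n → ZMod 2) → ZMod 2) (x : Fin n → ZMod 2) :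
    walsh g x = 2 ^ n - 2 * ((univ.filter fun y => g y + dotp x y = 1).card : ℤ) := by
  have key : ∀ v : ZMod 2, (-1 : ℤ) ^ v.val = 1 - 2 * (if v = 1 then (1:ℤ) else 0) := by decide
  unfold walsh
  calc ∑ y : Fin n → ZMod 2, (-1 : ℤ) ^ (g y + dotp x y).val
      = ∑ y : Fin n → ZMod 2, (1 - 2 * (if g y + dotp x y = 1 then (1:ℤ) else 0)) := by
        exact Finset.sum_congr rfl fun y _ => key _
    _ = 2 ^ n - 2 * ((univ.filter fun y => g y + dotp x y = 1).card : ℤ) := by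
        rw [Finset.sum_sub_distrib, Finset.sum_const, ← Finset.mul_sum, Finset.sum_boole]
        simp [Fintype.card_pi]

lemma aux_count_split {m : ℕ} (f : (Fin (2*m) → ZMod 2) → ZMod 2) (x : Fin (2*m) → ZMod 2) :
    (univ.filter fun y => f y + dotp x y = 1).card + 2 * codewordWeight f x
      = wt f + (univ.filter fun y => dotp x y = 1).card := by
  have key : ∀ v w : ZMod 2, (if v + w = 1 then (1:ℕ) else 0) + 2 * (if v = 1 ∧ w = 1 then 1 else 0)
      = (if v = 1 then 1 else 0) + (if w = 1 then 1 else 0) := by decide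
  simp only [codewordWeight, wt, Finset.card_filter]
  rw [← Finset.sum_add_distrib, Finset.mul_sum, ← Finset.sum_add_distrib]
  exact Finset.sum_congr rfl fun y _ => key _ _

lemma aux_count_dot {n : ℕ} (x : Fin n → ZMod 2) (hx : x ≠ 0) :
    2 * (univ.filter fun y => dotp x y = 1).card = 2 ^ n := by
  obtain ⟨i, hi⟩ := Function.ne_iff.mp hx
  have hxi : x i = 1 := by
    simp only [Pi.zero_apply] at hi
    exact (by decide : ∀ v : ZMod 2, v ≠ 0 → v = 1) _ hi
  set e : Fin n → ZMod 2 := fun j => if j = i then 1 else 0 with he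
  have hde : ∀ y, dotp x (y + e) = dotp x y + 1 := by
    intro y
    have : dotp x e = 1 := by
      simp [dotp, he, Finset.sum_ite_eq', hxi]
    simp only [dotp, Pi.add_apply, mul_add, Finset.sum_add_distrib] at *
    rw [this]
  have hcard : (univ.filter fun y => dotp x y = 1).card
      = (univ.filter fun y => dotp x y = 0).card := by
    apply Finset.card_bij' (fun y _ => y + e) (fun y _ => y + e)
    · intro a ha
      simp only [mem_filter, mem_univ, true_and] at ha ⊢
      rw [hde, ha]; decide
    · intro a ha
      simp only [mem_filter, mem_univ, true_and] at ha ⊢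
      rw [hde, ha]; decide
    · intro a _
      funext j
      simp only [Pi.add_apply, he]
      generalize a j = v; generalize (if j = i then (1:ZMod 2) else 0) = w
      revert v w; decide
    · intro a _
      funext j
      simp only [Pi.add_apply, he]
      generalize a j = v; generalize (if j = i then (1:ZMod 2) else 0) = w
      revert v w; decide
  have hsplit : (univ.filter fun y => dotp x y = 1).card
      + (univ.filter fun y => dotp x y = 0).card = 2 ^ n := by
    have : ∀ y : Fin n → ZMod 2, dotp x y = 0 ↔ ¬ dotp x y = 1 := by
      intro y; generalize dotp x y = v; revert v; decide
    rw [Finset.filter_congr (fun y _ => this y)]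
    rw [Finset.card_filter_add_card_filter_not]
    simp [Fintype.card_pi]
  omega

lemma aux_walsh_formula {m : ℕ} (f : (Fin (2*m) → ZMod 2) → ZMod 2) (x : Fin (2*m) → ZMod 2)
    (hx : x ≠ 0) :
    walsh f x = 4 * (codewordWeight f x : ℤ) - 2 * (wt f : ℤ) := by
  have h1 := aux_walsh_eq_count f x
  have h2 := aux_count_split f x
  have h3 := aux_count_dot x hx
  have h2' : ((univ.filter fun y => f y + dotp x y = 1).card : ℤ)
      + 2 * (codewordWeight f x : ℤ)
      = (wt f : ℤ) + ((univ.filter fun y => dotp x y = 1).card : ℤ) := by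
    exact_mod_cast congrArg (Nat.cast : ℕ → ℤ) h2
  have h3' : 2 * ((univ.filter fun y => dotp x y = 1).card : ℤ) = 2 ^ (2*m) := by exact_mod_cast h3
  linarith [h1, h2', h3']

end Aux


/-- for a bent function `f` on `F_2^(2m)` with `f 0 = 0`, the graph `R(f)` is
isomorphic to the Cayley graph of `x ↦ f̂ x + wc f`. -/
theorem Rgraph_iso_cayley_dual {m : ℕ} (hm : 1 ≤ m)
    (f : (Fin (2 * m) → ZMod 2) → ZMod 2) (hf : IsBent f) (h0 : f 0 = 0) :
    Nonempty (Rgraph f ≃g cayley (fun x => dual f x + wc f)) := by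
  obtain ⟨k, rfl⟩ : ∃ k, m = k + 1 := ⟨m - 1, (Nat.succ_pred_eq_of_pos hm).symm⟩
  -- basic positivity facts
  have hBpos : (1:ℕ) ≤ 2 ^ k := Nat.one_le_two_pow
  have hBA : (2:ℕ) ^ k ≤ 2 ^ (2*k) := Nat.pow_le_pow_right (by norm_num) (by omega)
  have hBA1 : (2:ℕ) ^ k ≤ 2 ^ (2*k+1) := Nat.pow_le_pow_right (by norm_num) (by omega)
  -- Walsh at 0
  have hd0 : ∀ y : Fin (2*(k+1)) → ZMod 2, dotp 0 y = 0 := by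
    intro y; simp [dotp]
  have hW0 : walsh f 0 = 2 ^ (2*(k+1)) - 2 * (wt f : ℤ) := by
    have h := aux_walsh_eq_count f 0
    rw [aux_walsh_eq_count f 0]
    have he : (univ.filter fun y => f y + dotp 0 y = 1) = (univ.filter fun y => f y = 1) :=
      Finset.filter_congr fun y _ => by rw [hd0, add_zero]
    rw [he]; rfl
  have hcases0 : walsh f 0 = 2 ^ (k+1) ∨ walsh f 0 = -(2 ^ (k+1)) :=
    (abs_eq (by positivity)).mp (hf 0)
  -- power rewriting facts over ℤ
  have pm : (2:ℤ) ^ (k+1) = 2 * 2 ^ k := by rw [pow_succ]; ring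
  have p2m : (2:ℤ) ^ (2*(k+1)) = 4 * 2 ^ (2*k) := by
    rw [show 2*(k+1) = 2*k + 2 by omega, pow_add]; ring
  have p2k1 : (2:ℤ) ^ (2*k+1) = 2 * 2 ^ (2*k) := by rw [pow_succ]; ring
  -- weight class dichotomy
  have hwc : (wc f = 0 ∧ wt f = 2 ^ (2*k+1) - 2 ^ k)
      ∨ (wc f = 1 ∧ wt f = 2 ^ (2*k+1) + 2 ^ k) := by
    have hwcdef : wc f = if wt f = 2 ^ (2*k+1) - 2 ^ k then 0 else 1 := by
      have e1 : 2 * (k+1) - 1 = 2*k+1 := by omega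
      have e2 : (k+1) - 1 = k := by omega
      rw [wc, e1, e2]
    rcases hcases0 with h | h
    · left
      have hwt : wt f = 2 ^ (2*k+1) - 2 ^ k := by
        have : (wt f : ℤ) = ((2 ^ (2*k+1) - 2 ^ k : ℕ) : ℤ) := by
          rw [Nat.cast_sub hBA1]; push_cast [p2k1]; rw [h] at hW0; linarith [hW0, pm, p2m]
        exact_mod_cast this
      exact ⟨by rw [hwcdef, if_pos hwt], hwt⟩
    · right
      have hwt : wt f = 2 ^ (2*k+1) + 2 ^ k := by
        have : (wt f : ℤ) = ((2 ^ (2*k+1) + 2 ^ k : ℕ) : ℤ) := by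
          push_cast [p2k1]; rw [h] at hW0; linarith [hW0, pm, p2m]
        exact_mod_cast this
      refine ⟨by rw [hwcdef, if_neg (by omega)], hwt⟩
  -- threshold casts
  have hT0 : ((2 ^ (2*(k+1)-2) - 2 ^ ((k+1)-1) : ℕ) : ℤ) = 2 ^ (2*k) - 2 ^ k := by
    rw [show 2*(k+1)-2 = 2*k by omega, show (k+1)-1 = k by omega, Nat.cast_sub hBA]; push_cast; ring
  have hT1 : ((2 ^ (2*(k+1)-2) + 2 ^ ((k+1)-1) : ℕ) : ℤ) = 2 ^ (2*k) + 2 ^ k := by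
    rw [show 2*(k+1)-2 = 2*k by omega, show (k+1)-1 = k by omega]; push_cast; ring
  -- the key pointwise equivalence
  have key : ∀ a : Fin (2*(k+1)) → ZMod 2, a ≠ 0 →
      ((codewordWeight f a =
        if wc f = 0 then 2 ^ (2*(k+1)-2) - 2 ^ ((k+1)-1) else 2 ^ (2*(k+1)-2) + 2 ^ ((k+1)-1))
        ↔ dual f a + wc f = 1) := by
    intro a ha
    have hwf := aux_walsh_formula f a ha
    have hcasesa : walsh f a = 2 ^ (k+1) ∨ walsh f a = -(2 ^ (k+1)) :=
      (abs_eq (by positivity)).mp (hf a)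
    rcases hwc with ⟨hwc0, hwt⟩ | ⟨hwc1, hwt⟩
    · -- wc f = 0
      have hwtZ : (wt f : ℤ) = 2 ^ (2*k+1) - 2 ^ k := by
        rw [hwt, Nat.cast_sub hBA1]; push_cast; ring
      rw [hwc0, if_pos rfl, add_zero]
      rcases hcasesa with h | h
      · -- dual = 0, not adjacent
        have hdual : dual f a = 0 := by rw [dual, if_pos h]
        rw [hdual]
        have hcwZ : (codewordWeight f a : ℤ) = 2 ^ (2*k) := by
          rw [h] at hwf; linarith [hwf, hwtZ, pm, p2k1]
        have hcw : codewordWeight f a = 2 ^ (2*k) := by exact_mod_cast hcwZ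
        constructor
        · intro hc
          exfalso
          rw [hcw] at hc
          omega
        · intro hc; exact absurd hc (by decide)
      · -- dual = 1, adjacent
        have hdual : dual f a = 1 := by
          rw [dual, if_neg]
          rw [h]
          intro hcontra
          have : (0:ℤ) < 2 ^ (k+1) := by positivity
          linarith
        rw [hdual]
        have hcwZ : (codewordWeight f a : ℤ) = 2 ^ (2*k) - 2 ^ k := by
          rw [h] at hwf; linarith [hwf, hwtZ, pm, p2k1]
        have hcw : codewordWeight f a = 2 ^ (2*(k+1)-2) - 2 ^ ((k+1)-1) := by
          have : ((codewordWeight f a : ℕ) : ℤ) = ((2 ^ (2*(k+1)-2) - 2 ^ ((k+1)-1) : ℕ) : ℤ) := by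
            rw [hT0, hcwZ]
          exact_mod_cast this
        simp [hcw]
    · -- wc f = 1
      have hwtZ : (wt f : ℤ) = 2 ^ (2*k+1) + 2 ^ k := by
        rw [hwt]; push_cast; ring
      have hwcne : ¬ wc f = 0 := by rw [hwc1]; decide
      rw [if_neg hwcne, hwc1]
      rcases hcasesa with h | h
      · -- dual = 0, adjacent
        have hdual : dual f a = 0 := by rw [dual, if_pos h]
        rw [hdual]
        have hcwZ : (codewordWeight f a : ℤ) = 2 ^ (2*k) + 2 ^ k := by
          rw [h] at hwf; linarith [hwf, hwtZ, pm, p2k1]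
        have hcw : codewordWeight f a = 2 ^ (2*(k+1)-2) + 2 ^ ((k+1)-1) := by
          have : ((codewordWeight f a : ℕ) : ℤ) = ((2 ^ (2*(k+1)-2) + 2 ^ ((k+1)-1) : ℕ) : ℤ) := by
            rw [hT1, hcwZ]
          exact_mod_cast this
        simp [hcw]
      · -- dual = 1, not adjacent
        have hdual : dual f a = 1 := by
          rw [dual, if_neg]
          rw [h]
          intro hcontra
          have : (0:ℤ) < 2 ^ (k+1) := by positivity
          linarith
        rw [hdual]
        have hcwZ : (codewordWeight f a : ℤ) = 2 ^ (2*k) := by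
          rw [h] at hwf; linarith [hwf, hwtZ, pm, p2k1]
        have hcw : codewordWeight f a = 2 ^ (2*k) := by exact_mod_cast hcwZ
        constructor
        · intro hc
          exfalso
          rw [hcw] at hc
          have hc' : ((2:ℕ) ^ (2*k) : ℤ) = ((2 ^ (2*(k+1)-2) + 2 ^ ((k+1)-1) : ℕ) : ℤ) := by
            exact_mod_cast congrArg (Nat.cast : ℕ → ℤ) hc
          rw [hT1] at hc'
          have : (1:ℤ) ≤ 2 ^ k := by exact_mod_cast hBpos
          push_cast at hc'
          linarith
        · intro hc; exact absurd hc (by decide)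
  -- assemble the isomorphism
  refine ⟨⟨Equiv.refl _, ?_⟩⟩
  intro x z
  simp only [Equiv.refl_apply, cayley, Rgraph]
  constructor
  · rintro ⟨hne, hc⟩
    have ha : x + z ≠ 0 := by
      intro h
      exact hne (funext fun i =>
        (by decide : ∀ v w : ZMod 2, v + w = 0 → v = w) _ _ (congrFun h i))
    exact ⟨hne, ((key (x+z) ha).mpr hc)⟩
  · rintro ⟨hne, hc⟩
    have ha : x + z ≠ 0 := by
      intro h
      exact hne (funext fun i =>
        (by decide : ∀ v w : ZMod 2, v + w = 0 → v = w) _ _ (congrFun h i))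
    exact ⟨hne, (key (x+z) ha).mp hc⟩
end

section
/- Let f be a bent Boolean function on F_2^{2m} with m ≥ 1, with dual f̂. For b, c ∈ F_2^{2m} let g_{b,c}(x) := f(x+b) + ⟨c,x⟩ + f(b). Then the weight class of g_{b,c} equals f(b) + ⟨c,b⟩ + f̂(c); that is, wt(g_{b,c}) = 2^{2m-1} - 2^{m-1} if f(b) + ⟨c,b⟩ + f̂(c) = 0 and wt(g_{b,c}) = 2^{2m-1} + 2^{m-1} if f(b) + ⟨c,b⟩ + f̂(c) = 1. Hence the weight class matrix of f equals the incidence matrix of the SDP design of f. -/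
open Finset

lemma chi_add (a b : ZMod 2) : (-1:ℤ)^((a+b).val) = (-1:ℤ)^a.val * (-1:ℤ)^b.val := by
  revert a b; decide

lemma chi_ite (a : ZMod 2) : (-1:ℤ)^a.val = 1 - 2 * (if a = 1 then (1:ℤ) else 0) := by
  revert a; decide

lemma dotp_zero_left {n : ℕ} (y : Fin n → ZMod 2) : dotp 0 y = 0 := by simp [dotp]

lemma dotp_add_right {n : ℕ} (c x y : Fin n → ZMod 2) :
    dotp c (x + y) = dotp c x + dotp c y := by
  simp [dotp, mul_add, Finset.sum_add_distrib]

lemma walsh_zero {n : ℕ} (g : (Fin n → ZMod 2) → ZMod 2) :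
    walsh g 0 = 2 ^ n - 2 * (wt g : ℤ) := by
  have : ∀ y, (-1:ℤ)^((g y + dotp 0 y).val) = 1 - 2 * (if g y = 1 then 1 else 0) := by
    intro y; rw [dotp_zero_left, add_zero, chi_ite]
  rw [walsh]
  simp only [this]
  rw [Finset.sum_sub_distrib, ← Finset.mul_sum, Finset.sum_boole]
  simp [wt, Finset.card_univ]

lemma chi4 (a1 a2 a3 a4 : ZMod 2) :
    (-1:ℤ)^((a1 + a2 + a3).val) = (-1:ℤ)^((a1 + (a2 + a4)).val) * (-1:ℤ)^((a3 + a4).val) := by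
  revert a1 a2 a3 a4; decide

lemma walsh_shift {n : ℕ} (f : (Fin n → ZMod 2) → ZMod 2) (b c : Fin n → ZMod 2) :
    walsh (fun x => f (x + b) + dotp c x + f b) 0 =
      walsh f c * (-1:ℤ)^((f b + dotp c b).val) := by
  have hbb : ∀ y : Fin n → ZMod 2, y + b + b = y := by
    intro y; funext i
    simp [Pi.add_apply, add_assoc, CharTwo.add_self_eq_zero]
  rw [walsh, walsh, Finset.sum_mul]
  refine Fintype.sum_equiv (Equiv.addRight b) _ _ (fun y => ?_)
  simp only [Equiv.coe_addRight]
  rw [dotp_zero_left, add_zero, dotp_add_right c y b]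
  exact chi4 (f (y+b)) (dotp c y) (f b) (dotp c b)

lemma zmod2_cases (z : ZMod 2) : z = 0 ∨ z = 1 := by revert z; decide


/-- the weight class of `g_{b,c} x = f (x+b) + ⟨c,x⟩ + f b` equals
`f b + ⟨c,b⟩ + f̂ c`; i.e. the weight class matrix equals the incidence matrix of the SDP
design of `f`. -/
theorem weight_class_matrix_eq_SDP {m : ℕ} (hm : 1 ≤ m)
    (f : (Fin (2 * m) → ZMod 2) → ZMod 2) (hf : IsBent f)
    (b c : Fin (2 * m) → ZMod 2) :
    wc (fun x => f (x + b) + dotp c x + f b) = f b + dotp c b + dual f c ∧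
    (f b + dotp c b + dual f c = 0 →
      wt (fun x => f (x + b) + dotp c x + f b) = 2 ^ (2 * m - 1) - 2 ^ (m - 1)) ∧
    (f b + dotp c b + dual f c = 1 →
      wt (fun x => f (x + b) + dotp c x + f b) = 2 ^ (2 * m - 1) + 2 ^ (m - 1)) := by
  have hW := hf c
  have hwalsh : walsh f c = (-1:ℤ)^((dual f c).val) * 2^m := by
    unfold dual; split_ifs with h
    · simpa using h
    · have h1 : walsh f c = -2^m := by
        rcases (abs_eq (by positivity)).mp hW with h1 | h1
        · exact absurd h1 h
        · exact h1
      rw [h1, show (ZMod.val (1:ZMod 2)) = 1 from rfl]; ring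
  have hkey : (2:ℤ)^(2*m) - 2*(wt (fun x => f (x + b) + dotp c x + f b) : ℤ)
      = (-1:ℤ)^((f b + dotp c b + dual f c).val) * 2^m := by
    rw [← walsh_zero, walsh_shift, hwalsh]; simp only [chi_add]; ring
  have hA : (2:ℤ)^(2*m) = 2 * ((2^(2*m-1) : ℕ) : ℤ) := by
    push_cast; rw [← pow_succ']; congr 1; omega
  have hB : (2:ℤ)^m = 2 * ((2^(m-1) : ℕ) : ℤ) := by
    push_cast; rw [← pow_succ']; congr 1; omega
  have hBA : (2:ℕ)^(m-1) ≤ 2^(2*m-1) := Nat.pow_le_pow_right (by norm_num) (by omega)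
  have hB1 : (1:ℕ) ≤ 2^(m-1) := Nat.one_le_two_pow
  rcases zmod2_cases (f b + dotp c b + dual f c) with h0 | h1
  · rw [h0] at hkey ⊢
    have hv : ((0 : ZMod 2)).val = 0 := rfl
    rw [hv, pow_zero, one_mul, hA, hB] at hkey
    have hwt : wt (fun x => f (x + b) + dotp c x + f b) = 2^(2*m-1) - 2^(m-1) := by omega
    refine ⟨by simp [wc, hwt], fun _ => hwt, fun h => by simp at h⟩
  · rw [h1] at hkey ⊢
    have hv : ((1 : ZMod 2)).val = 1 := rfl
    rw [hv, pow_one, hA, hB] at hkey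
    have hwt : wt (fun x => f (x + b) + dotp c x + f b) = 2^(2*m-1) + 2^(m-1) := by omega
    have hne : 2^(2*m-1) + 2^(m-1) ≠ 2^(2*m-1) - 2^(m-1) := by omega
    refine ⟨by simp [wc, hwt, hne], fun h => by simp at h, fun _ => hwt⟩
end
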